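/- Let p be a prime, ψ an additive character of ℚ_p of conductor ℤ_p, and let χ : ℚ_pˣ → ℂˣ be a ramified multiplicative character of conductor m ≥ 1, i.e. χ(u) = 1 for every u ∈ 1 + p^mℤ_p, but χ(u₀) ≠ 1 for some unit u₀ ∈ 1 + p^{m−1}ℤ_p (for m = 1 this means χ is nontrivial on ℤ_pˣ). Then for every integer k with k ≠ m: ∫_{‖x‖ = p^k} ψ(x)·χ(x) d^×x = 0. -/

import Mathlib

open MeasureTheory

noncomputable section

variable (p : ℕ) [Fact p.Prime]

instance : MeasurableSpace ℚ_[p] := borel _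
instance : BorelSpace ℚ_[p] := ⟨rfl⟩

/-- Multiplication by a unit preserves the Haar measure normalized by `vol(ℤ_p) = 1`. -/
lemma map_unit_mul_haar (μ : Measure ℚ_[p]) [μ.IsAddHaarMeasure]
    (hμ : μ {x : ℚ_[p] | ‖x‖ ≤ 1} = 1) (u : ℚ_[p]) (hu : ‖u‖ = 1) :
    Measure.map (fun x => u * x) μ = μ := by
  have hu0 : u ≠ 0 := by
    intro h; rw [h, norm_zero] at hu; exact one_ne_zero hu.symm
  let e : ℚ_[p] ≃ₜ ℚ_[p] := Homeomorph.mulLeft₀ u hu0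
  let a : ℚ_[p] ≃+ ℚ_[p] :=
    { toFun := fun x => u * x
      invFun := fun x => u⁻¹ * x
      left_inv := fun x => by field_simp
      right_inv := fun x => by field_simp
      map_add' := mul_add u }
  have hea : ⇑a = fun x => u * x := rfl
  have h1 : (Measure.map (fun x => u * x) μ).IsAddHaarMeasure := by
    rw [← hea]
    exact a.isAddHaarMeasure_map μ e.continuous e.symm.continuous
  have h2 : (Measure.map (fun x => u * x) μ) =
      Measure.addHaarScalarFactor (Measure.map (fun x => u * x) μ) μ • μ :=
    Measure.isAddLeftInvariant_eq_smul _ μ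
  have hB : MeasurableSet {x : ℚ_[p] | ‖x‖ ≤ 1} :=
    (isClosed_le continuous_norm continuous_const).measurableSet
  have hmeas : Measurable (fun x : ℚ_[p] => u * x) := e.continuous.measurable
  have hpre : (fun x : ℚ_[p] => u * x) ⁻¹' {x : ℚ_[p] | ‖x‖ ≤ 1}
      = {x : ℚ_[p] | ‖x‖ ≤ 1} := by
    ext x
    simp only [Set.mem_preimage, Set.mem_setOf_eq, norm_mul, hu, one_mul]
  have h3 : (Measure.map (fun x => u * x) μ) {x : ℚ_[p] | ‖x‖ ≤ 1} = 1 := by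
    rw [Measure.map_apply hmeas hB, hpre, hμ]
  rw [h2] at h3
  rw [Measure.smul_apply, hμ, ENNReal.smul_def, smul_eq_mul, mul_one,
    ENNReal.coe_eq_one] at h3
  rw [h2, h3, one_smul]

/-- Lemma 3.4: for a ramified character `χ` of conductor `m ≥ 1`,
the integral `∫_{‖x‖=p^k} ψ(x) χ(x) d^×x` vanishes for every `k ≠ m`, where
`d^×x = (1−1/p)⁻¹‖x‖⁻¹dx` and `dx` is the Haar measure with `vol(ℤ_p) = 1`. -/
theorem stmt_14 (μ : Measure ℚ_[p]) [μ.IsAddHaarMeasure]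
    (hμ : μ {x : ℚ_[p] | ‖x‖ ≤ 1} = 1)
    (ψ : ℚ_[p] → ℂ)
    (hψadd : ∀ x y : ℚ_[p], ψ (x + y) = ψ x * ψ y)
    (hψ1 : ∀ x : ℚ_[p], ‖x‖ ≤ 1 → ψ x = 1)
    (hψnt : ∃ x : ℚ_[p], ‖x‖ = (p : ℝ) ∧ ψ x ≠ 1)
    (χ : ℚ_[p] → ℂ)
    (hχmul : ∀ a b : ℚ_[p], a ≠ 0 → b ≠ 0 → χ (a * b) = χ a * χ b)
    (m : ℕ) (hm : 1 ≤ m)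
    (hχ1 : ∀ u : ℚ_[p], ‖u - 1‖ ≤ (p : ℝ) ^ (-(m : ℤ)) → χ u = 1)
    (hχnt : ∃ u : ℚ_[p], ‖u‖ = 1 ∧ ‖u - 1‖ ≤ (p : ℝ) ^ (-((m : ℤ) - 1)) ∧ χ u ≠ 1) :
    ∀ k : ℤ, k ≠ (m : ℤ) →
      (1 - 1/(p : ℝ))⁻¹ •
        ∫ x in {x : ℚ_[p] | ‖x‖ = (p : ℝ) ^ k}, (‖x‖ : ℂ)⁻¹ * (ψ x * χ x) ∂μ = 0 := by
  have hp1 : (1 : ℝ) < p := by exact_mod_cast (Fact.out : p.Prime).one_lt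
  have hp0 : (0 : ℝ) < p := lt_trans one_pos hp1
  intro k hk
  set f : ℚ_[p] → ℂ := fun x => (‖x‖ : ℂ)⁻¹ * (ψ x * χ x) with hf
  set S := {x : ℚ_[p] | ‖x‖ = (p : ℝ) ^ k} with hSdef
  have hS : MeasurableSet S := (isClosed_eq continuous_norm continuous_const).measurableSet
  suffices hI : ∫ x in S, f x ∂μ = 0 by rw [hI, smul_zero]
  rw [← integral_indicator hS]
  set g := S.indicator f with hg
  have hxS : ∀ x : ℚ_[p], x ∈ S → x ≠ 0 := by
    intro x hx h0
    rw [hSdef, Set.mem_setOf_eq, h0, norm_zero] at hx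
    exact absurd hx.symm (ne_of_gt (zpow_pos hp0 k))
  rcases lt_or_gt_of_ne hk with hlt | hgt
  · -- k < m : use the multiplicative substitution x ↦ u x
    obtain ⟨u, hu1, hu2, hu3⟩ := hχnt
    have hu0 : u ≠ 0 := by
      intro h; rw [h, norm_zero] at hu1; exact one_ne_zero hu1.symm
    have hpt : ∀ x : ℚ_[p], g (u * x) = χ u * g x := by
      intro x
      by_cases hx : x ∈ S
      · have hx0 : x ≠ 0 := hxS x hx
        have hxn : ‖x‖ = (p : ℝ) ^ k := hx
        have hux : u * x ∈ S := by
          rw [hSdef, Set.mem_setOf_eq, norm_mul, hu1, one_mul]; exact hxn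
        rw [hg, Set.indicator_of_mem hux, Set.indicator_of_mem hx]
        have hnorm : ‖u * x‖ = ‖x‖ := by rw [norm_mul, hu1, one_mul]
        have hψu : ψ (u * x) = ψ x := by
          have heq : u * x = x + (u - 1) * x := by ring
          have hb : ‖(u - 1) * x‖ ≤ 1 := by
            rw [norm_mul, hxn]
            calc ‖u - 1‖ * (p : ℝ) ^ k ≤ (p : ℝ) ^ (-((m : ℤ) - 1)) * (p : ℝ) ^ k := by
                  apply mul_le_mul_of_nonneg_right hu2 (le_of_lt (zpow_pos hp0 k))
              _ = (p : ℝ) ^ (-((m : ℤ) - 1) + k) := (zpow_add₀ (ne_of_gt hp0) _ _).symm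
              _ ≤ 1 := zpow_le_one_of_nonpos₀ (le_of_lt hp1) (by omega)
          rw [heq, hψadd, hψ1 _ hb, mul_one]
        have hχu : χ (u * x) = χ u * χ x := hχmul u x hu0 hx0
        show (‖u * x‖ : ℂ)⁻¹ * (ψ (u * x) * χ (u * x)) = χ u * ((‖x‖ : ℂ)⁻¹ * (ψ x * χ x))
        rw [hnorm, hψu, hχu]; ring
      · have hux : u * x ∉ S := by
          intro h
          apply hx
          rw [hSdef, Set.mem_setOf_eq] at h ⊢
          rw [norm_mul, hu1, one_mul] at h
          exact h
        rw [hg, Set.indicator_of_notMem hux, Set.indicator_of_notMem hx, mul_zero]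
    have hmap := map_unit_mul_haar p μ hμ u hu1
    let E : ℚ_[p] ≃ᵐ ℚ_[p] := (Homeomorph.mulLeft₀ u hu0).toMeasurableEquiv
    have hE : ⇑E = fun x => u * x := rfl
    have key : ∫ x, g x ∂μ = χ u * ∫ x, g x ∂μ := by
      calc ∫ x, g x ∂μ = ∫ y, g y ∂(Measure.map (⇑E) μ) := by rw [hE, hmap]
        _ = ∫ x, g (E x) ∂μ := integral_map_equiv E g
        _ = ∫ x, χ u * g x ∂μ := by
            apply integral_congr_ae
            filter_upwards with x
            rw [hE]; exact hpt x
        _ = χ u * ∫ x, g x ∂μ := integral_const_mul _ _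
    have h4 : (χ u - 1) * ∫ x, g x ∂μ = 0 := by
      rw [sub_mul, one_mul, ← key, sub_self]
    rcases mul_eq_zero.mp h4 with h | h
    · exact absurd (sub_eq_zero.mp h) hu3
    · exact h
  · -- k > m : use the additive substitution x ↦ x + c
    obtain ⟨c, hc1, hc2⟩ := hψnt
    have hck : ‖c‖ < (p : ℝ) ^ k := by
      rw [hc1]
      calc (p : ℝ) = (p : ℝ) ^ (1 : ℤ) := (zpow_one _).symm
        _ < (p : ℝ) ^ k := zpow_lt_zpow_right₀ hp1 (by omega)
    have hpt : ∀ x : ℚ_[p], g (x + c) = ψ c * g x := by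
      intro x
      by_cases hx : x ∈ S
      · have hx0 : x ≠ 0 := hxS x hx
        have hxn : ‖x‖ = (p : ℝ) ^ k := hx
        have hnorm : ‖x + c‖ = ‖x‖ := by
          rw [Padic.add_eq_max_of_ne (by rw [hxn]; exact ne_of_gt hck)]
          exact max_eq_left (le_of_lt (by rw [hxn]; exact hck))
        have hxc : x + c ∈ S := by
          rw [hSdef, Set.mem_setOf_eq, hnorm]; exact hxn
        rw [hg, Set.indicator_of_mem hxc, Set.indicator_of_mem hx]
        have hψc : ψ (x + c) = ψ x * ψ c := hψadd x c
        -- χ (x + c) = χ x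
        have ht : ‖x⁻¹ * c‖ ≤ (p : ℝ) ^ (-(m : ℤ)) := by
          rw [norm_mul, norm_inv, hxn, hc1]
          calc ((p : ℝ) ^ k)⁻¹ * p = (p : ℝ) ^ (-k) * (p : ℝ) ^ (1 : ℤ) := by
                rw [zpow_neg, zpow_one]
            _ = (p : ℝ) ^ (-k + 1) := (zpow_add₀ (ne_of_gt hp0) _ _).symm
            _ ≤ (p : ℝ) ^ (-(m : ℤ)) := zpow_le_zpow_right₀ (le_of_lt hp1) (by omega)
        have ht1 : ‖x⁻¹ * c‖ < 1 := lt_of_le_of_lt ht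
          (zpow_lt_one_of_neg₀ hp1 (by omega))
        have h10 : (1 + x⁻¹ * c) ≠ 0 := by
          intro h
          have : x⁻¹ * c = -1 := by linear_combination h
          rw [this, norm_neg, norm_one] at ht1
          exact lt_irrefl 1 ht1
        have heq : x + c = x * (1 + x⁻¹ * c) := by field_simp
        have hχc : χ (x + c) = χ x := by
          rw [heq, hχmul x _ hx0 h10, hχ1 (1 + x⁻¹ * c) (by rw [add_sub_cancel_left]; exact ht),
            mul_one]
        show (‖x + c‖ : ℂ)⁻¹ * (ψ (x + c) * χ (x + c)) = ψ c * ((‖x‖ : ℂ)⁻¹ * (ψ x * χ x))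
        rw [hnorm, hψc, hχc]; ring
      · have hxc : x + c ∉ S := by
          intro h
          apply hx
          rw [hSdef, Set.mem_setOf_eq] at h ⊢
          have : ‖x‖ = ‖(x + c) + (-c)‖ := by ring_nf
          rw [this, Padic.add_eq_max_of_ne (by rw [h, norm_neg]; exact ne_of_gt hck)]
          rw [h, norm_neg]
          exact max_eq_left (le_of_lt hck)
        rw [hg, Set.indicator_of_notMem hxc, Set.indicator_of_notMem hx, mul_zero]
    have key : ∫ x, g x ∂μ = ψ c * ∫ x, g x ∂μ := by
      calc ∫ x, g x ∂μ = ∫ x, g (x + c) ∂μ := (integral_add_right_eq_self g c).symm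
        _ = ∫ x, ψ c * g x ∂μ := by
            apply integral_congr_ae
            filter_upwards with x
            exact hpt x
        _ = ψ c * ∫ x, g x ∂μ := integral_const_mul _ _
    have h4 : (ψ c - 1) * ∫ x, g x ∂μ = 0 := by
      rw [sub_mul, one_mul, ← key, sub_self]
    rcases mul_eq_zero.mp h4 with h | h
    · exact absurd (sub_eq_zero.mp h) hc2
    · exact h

end
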